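/- For protocol B, the trace distance between the attacker's n-bit ciphertext state and the maximally mixed state satisfies ‖ρ_{(x₁,…,xₙ)} − 2^{−ln} I^{⊗n}‖_tr ≤ √((2ⁿ−1)/(2^l−1)); hence if 2^{l−n} grows superpolynomially (i.e., for every polynomial p, √(2^{n−l}) < 1/p(n) for large n), the protocol is information-theoretically indistinguishable. -/

import Mathlib

open Matrix

/-- Trace norm of a square complex matrix: the sum of its singular values. -/
noncomputable def traceNorm {d : Type*} [Fintype d] [DecidableEq d]
    (A : Matrix d d ℂ) : ℝ :=
  ∑ i, Real.sqrt ((Matrix.isHermitian_conjTranspose_mul_self A).eigenvalues i)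

/-- Protocol-B single-bit cipher density operator for plaintext bit `x` and key `k`:
`ρ_{(x,k)} = 2^{−l} ∑_{i,b} (−1)^{bx} |i⟩⟨i⊕bk|`. -/
noncomputable def rhoB (l : ℕ) (x : ZMod 2) (k : Fin l → ZMod 2) :
    Matrix (Fin l → ZMod 2) (Fin l → ZMod 2) ℂ :=
  ((2 : ℂ) ^ l)⁻¹ • ∑ i, ∑ b : ZMod 2,
    ((-1 : ℂ)) ^ ((b * x).val) • Matrix.single i (i + b • k) (1 : ℂ)

/-- Attacker's state for an `n`-bit plaintext `x`, averaged over the key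
`k` uniform on `{0,1}^l \ {0}`:
`ρ_{(x₁,…,xₙ)} = (2^l−1)^{−1} ∑_{k≠0} ρ_{(x₁,k)} ⊗ ⋯ ⊗ ρ_{(xₙ,k)}`. -/
noncomputable def rhoBn (l n : ℕ) (x : Fin n → ZMod 2) :
    Matrix (Fin n → Fin l → ZMod 2) (Fin n → Fin l → ZMod 2) ℂ :=
  ((2 : ℂ) ^ l - 1)⁻¹ • ∑ k ∈ Finset.univ.filter (fun k : Fin l → ZMod 2 => k ≠ 0),
    Matrix.of fun I J => ∏ j, rhoB l (x j) k (I j) (J j)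

open Finset

lemma trace_eq_sum_eig {d : Type*} [Fintype d] [DecidableEq d] {A : Matrix d d ℂ}
    (hA : A.IsHermitian) : A.trace = ∑ i, (hA.eigenvalues i : ℂ) := by
  conv_lhs => rw [hA.spectral_theorem]
  rw [Unitary.conjStarAlgAut_apply]
  rw [Matrix.trace_mul_cycle]
  rw [show (star (hA.eigenvectorUnitary : Matrix d d ℂ)) * (hA.eigenvectorUnitary : Matrix d d ℂ) = 1
    from (Matrix.mem_unitaryGroup_iff').mp (hA.eigenvectorUnitary).2]
  rw [one_mul, Matrix.trace_diagonal]
  rfl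

lemma traceNorm_le_sqrt {d : Type*} [Fintype d] [DecidableEq d] (A : Matrix d d ℂ) :
    traceNorm A ≤ Real.sqrt ((Fintype.card d) * ∑ i, ∑ j, ‖A i j‖ ^ 2) := by
  set hH := Matrix.isHermitian_conjTranspose_mul_self A
  have hnonneg : ∀ i, 0 ≤ hH.eigenvalues i :=
    Matrix.eigenvalues_conjTranspose_mul_self_nonneg A
  have hsum : ∑ i, hH.eigenvalues i = ∑ i, ∑ j, ‖A i j‖ ^ 2 := by
    have h1 : (Aᴴ * A).trace = ∑ i, (hH.eigenvalues i : ℂ) := trace_eq_sum_eig hH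
    have h2 : (Aᴴ * A).trace = ((∑ i, ∑ j, ‖A i j‖ ^ 2 : ℝ) : ℂ) := by
      rw [Matrix.trace, show (∑ i, ∑ j, ‖A i j‖ ^ 2 : ℝ) = ∑ j, ∑ i, ‖A i j‖ ^ 2 from
        Finset.sum_comm]
      push_cast
      refine Finset.sum_congr rfl fun j _ => ?_
      rw [Matrix.diag_apply, Matrix.mul_apply]
      refine Finset.sum_congr rfl fun i _ => ?_
      rw [Matrix.conjTranspose_apply]
      rw [show (star (A i j)) = (starRingEnd ℂ) (A i j) from rfl]
      rw [Complex.conj_mul']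
    have := h1.symm.trans h2
    push_cast at this
    exact_mod_cast this
  have key : (∑ i, Real.sqrt (hH.eigenvalues i)) ^ 2
      ≤ (Fintype.card d) * ∑ i, ∑ j, ‖A i j‖ ^ 2 := by
    calc (∑ i, Real.sqrt (hH.eigenvalues i)) ^ 2
        ≤ (Finset.univ.card : ℝ) * ∑ i, Real.sqrt (hH.eigenvalues i) ^ 2 :=
          sq_sum_le_card_mul_sum_sq
      _ = (Fintype.card d) * ∑ i, hH.eigenvalues i := by
          rw [Finset.card_univ]
          congr 1
          exact Finset.sum_congr rfl fun i _ => Real.sq_sqrt (hnonneg i)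
      _ = _ := by rw [hsum]
  rw [traceNorm]
  exact Real.le_sqrt_of_sq_le key

lemma zmod2_sum {M : Type*} [AddCommMonoid M] (f : ZMod 2 → M) :
    ∑ b : ZMod 2, f b = f 0 + f 1 := by
  exact Fin.sum_univ_two f

noncomputable def eR (l : ℕ) (x : ZMod 2) (k i j : Fin l → ZMod 2) : ℝ :=
  ((2:ℝ)^l)⁻¹ * ((if j = i then 1 else 0) + (-1:ℝ)^(x.val) * (if j = i + k then 1 else 0))

lemma rhoB_apply (l : ℕ) (x : ZMod 2) (k i j : Fin l → ZMod 2) :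
    rhoB l x k i j = ((eR l x k i j : ℝ) : ℂ) := by
  unfold rhoB eR
  rw [Matrix.smul_apply, Matrix.sum_apply]
  have : ∀ i' : Fin l → ZMod 2, (∑ b : ZMod 2,
      ((-1 : ℂ)) ^ ((b * x).val) • Matrix.single i' (i' + b • k) (1 : ℂ)) i j
      = (if i' = i ∧ i' = j then 1 else 0)
        + (-1:ℂ)^(x.val) * (if i' = i ∧ i' + k = j then 1 else 0) := by
    intro i'
    rw [Matrix.sum_apply, zmod2_sum]
    simp [Matrix.single_apply, Matrix.smul_apply]
  simp only [this]
  rw [Finset.sum_add_distrib]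
  rw [← Finset.mul_sum]
  simp only [ite_and, Finset.sum_ite_eq', Finset.mem_univ, if_true, smul_eq_mul]
  push_cast [apply_ite Complex.ofReal]
  have e1 : (if i = j then (1:ℂ) else 0) = (if j = i then 1 else 0) := by
    simp only [eq_comm]
  have e2 : (if i + k = j then (1:ℂ) else 0) = (if j = i + k then 1 else 0) := by
    simp only [eq_comm]
  rw [e1, e2]


-- Cross-term lemma

lemma cross (l : ℕ) (x y : ZMod 2) {k k' : Fin l → ZMod 2} (hk : k ≠ 0) (hk' : k' ≠ 0) :
    ∑ a : Fin l → ZMod 2, ∑ b : Fin l → ZMod 2, eR l x k a b * eR l y k' a b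
      = ((2:ℝ)^l)⁻¹ * (1 + if k = k' then (-1:ℝ)^(x.val + y.val) else 0) := by
  have hcard : (Fintype.card (Fin l → ZMod 2) : ℝ) = 2^l := by
    simp [Fintype.card_fun, ZMod.card]
  unfold eR
  have expand : ∀ a b : Fin l → ZMod 2,
      (((2:ℝ)^l)⁻¹ * ((if b = a then 1 else 0) + (-1:ℝ)^(x.val) * (if b = a + k then 1 else 0)))
      * (((2:ℝ)^l)⁻¹ * ((if b = a then 1 else 0) + (-1:ℝ)^(y.val) * (if b = a + k' then 1 else 0)))
      = ((2:ℝ)^l)⁻¹ * ((2:ℝ)^l)⁻¹ *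
        ((if b = a then 1 else 0) * (if b = a then 1 else 0)
          + (-1:ℝ)^(y.val) * ((if b = a then 1 else 0) * (if b = a + k' then 1 else 0))
          + (-1:ℝ)^(x.val) * ((if b = a + k then 1 else 0) * (if b = a then 1 else 0))
          + (-1:ℝ)^(x.val) * (-1:ℝ)^(y.val) * ((if b = a + k then 1 else 0) * (if b = a + k' then 1 else 0))) := by
    intro a b; ring
  simp only [expand]
  simp only [← Finset.mul_sum]
  have key : ∀ u v : Fin l → ZMod 2, ∑ b : Fin l → ZMod 2,
      (if b = u then (1:ℝ) else 0) * (if b = v then 1 else 0) = if u = v then 1 else 0 := by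
    intro u v
    simp only [ite_mul, one_mul, zero_mul, Finset.sum_ite_eq', Finset.mem_univ, if_true]
  have inner : ∀ a : Fin l → ZMod 2, ∑ b : Fin l → ZMod 2,
      ((if b = a then (1:ℝ) else 0) * (if b = a then 1 else 0)
          + (-1:ℝ)^(y.val) * ((if b = a then 1 else 0) * (if b = a + k' then 1 else 0))
          + (-1:ℝ)^(x.val) * ((if b = a + k then 1 else 0) * (if b = a then 1 else 0))
          + (-1:ℝ)^(x.val) * (-1:ℝ)^(y.val) * ((if b = a + k then 1 else 0) * (if b = a + k' then 1 else 0)))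
      = 1 + (-1:ℝ)^(x.val) * (-1:ℝ)^(y.val) * (if k = k' then 1 else 0) := by
    intro a
    rw [Finset.sum_add_distrib, Finset.sum_add_distrib, Finset.sum_add_distrib,
      ← Finset.mul_sum, ← Finset.mul_sum, ← Finset.mul_sum, key, key, key, key]
    simp only [eq_self_iff_true, if_true, left_eq_add, add_eq_left,
      add_right_inj, if_neg hk, if_neg hk']
    ring
  simp only [inner]
  rw [Finset.sum_const, Finset.card_univ, nsmul_eq_mul, hcard]
  have h2l : (2:ℝ)^l ≠ 0 := by positivity
  rw [pow_add]
  split_ifs <;> field_simp <;> ring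

lemma sum_prod_swap {n : ℕ} {α : Type*} [Fintype α] [DecidableEq α] (f : Fin n → α → ℝ) :
    ∑ I : Fin n → α, ∏ j, f j (I j) = ∏ j, ∑ a, f j a := by
  rw [show (Finset.univ : Finset (Fin n → α)) = Fintype.piFinset (fun _ => Finset.univ) from
    (Fintype.piFinset_univ).symm, ← Finset.prod_univ_sum]

lemma sum_sum_prod_swap {n : ℕ} {α : Type*} [Fintype α] [DecidableEq α]
    (f : Fin n → α → α → ℝ) :
    ∑ I : Fin n → α, ∑ J : Fin n → α, ∏ j, f j (I j) (J j) = ∏ j, ∑ a, ∑ b, f j a b := by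
  have h1 : ∀ I : Fin n → α, ∑ J : Fin n → α, ∏ j, f j (I j) (J j) = ∏ j, ∑ b, f j (I j) b :=
    fun I => sum_prod_swap (fun j b => f j (I j) b)
  simp only [h1]
  exact sum_prod_swap (fun j a => ∑ b, f j a b)

lemma eR_trace (l : ℕ) (x : ZMod 2) {k : Fin l → ZMod 2} (hk : k ≠ 0) :
    ∑ a : Fin l → ZMod 2, eR l x k a a = 1 := by
  unfold eR
  have hcard : (Fintype.card (Fin l → ZMod 2) : ℝ) = 2^l := by
    simp [Fintype.card_fun, ZMod.card]
  have hz : ∀ a : Fin l → ZMod 2, (if a = a + k then (1:ℝ) else 0) = 0 := by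
    intro a; simp [left_eq_add, hk]
  simp only [hz, eq_self_iff_true, if_true, mul_zero, add_zero, mul_one]
  rw [Finset.sum_const, Finset.card_univ, nsmul_eq_mul, hcard]
  have h2l : (2:ℝ)^l ≠ 0 := by positivity
  field_simp

noncomputable def TT (l n : ℕ) (x : Fin n → ZMod 2) (k : Fin l → ZMod 2)
    (I J : Fin n → Fin l → ZMod 2) : ℝ :=
  ∏ j, eR l (x j) k (I j) (J j)

lemma pairSum (l n : ℕ) (x y : Fin n → ZMod 2) {k k' : Fin l → ZMod 2}
    (hk : k ≠ 0) (hk' : k' ≠ 0) :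
    ∑ I : Fin n → Fin l → ZMod 2, ∑ J : Fin n → Fin l → ZMod 2,
      TT l n x k I J * TT l n y k' I J
    = ((2:ℝ)^(l*n))⁻¹ *
        (if k = k' then ∏ j, (1 + (-1:ℝ)^((x j).val + (y j).val)) else 1) := by
  unfold TT
  have h1 : ∀ I J : Fin n → Fin l → ZMod 2,
      (∏ j, eR l (x j) k (I j) (J j)) * (∏ j, eR l (y j) k' (I j) (J j))
      = ∏ j, (eR l (x j) k (I j) (J j) * eR l (y j) k' (I j) (J j)) := by
    intro I J; rw [Finset.prod_mul_distrib]
  simp only [h1]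
  rw [sum_sum_prod_swap (fun j a b => eR l (x j) k a b * eR l (y j) k' a b)]
  have h2 : ∀ j, ∑ a : Fin l → ZMod 2, ∑ b : Fin l → ZMod 2,
      eR l (x j) k a b * eR l (y j) k' a b
      = ((2:ℝ)^l)⁻¹ * (1 + if k = k' then (-1:ℝ)^((x j).val + (y j).val) else 0) :=
    fun j => cross l (x j) (y j) hk hk'
  simp only [h2]
  rw [Finset.prod_mul_distrib, Finset.prod_const, Finset.card_univ, Fintype.card_fin,
    inv_pow, ← pow_mul]
  split_ifs with h
  · simp [h]
  · simp only [if_neg h, add_zero, Finset.prod_const_one, mul_one]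

lemma traceSum (l n : ℕ) (x : Fin n → ZMod 2) {k : Fin l → ZMod 2} (hk : k ≠ 0) :
    ∑ I : Fin n → Fin l → ZMod 2, TT l n x k I I = 1 := by
  unfold TT
  rw [sum_prod_swap (fun j a => eR l (x j) k a a)]
  simp only [eR_trace l _ hk, Finset.prod_const_one]

abbrev kS (l : ℕ) : Finset (Fin l → ZMod 2) := Finset.univ.filter (fun k => k ≠ 0)

lemma kS_card (l : ℕ) : (kS l).card = 2^l - 1 := by
  rw [show kS l = Finset.univ.erase 0 from Finset.filter_ne' _ _,
    Finset.card_erase_of_mem (Finset.mem_univ _), Finset.card_univ]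
  simp [Fintype.card_fun, ZMod.card]

lemma kS_card_real (l : ℕ) : ((kS l).card : ℝ) = (2:ℝ)^l - 1 := by
  rw [kS_card]
  have h1 : (1:ℕ) ≤ 2^l := Nat.one_le_two_pow
  push_cast [h1]
  ring

lemma card_beta (l n : ℕ) : (Fintype.card (Fin n → Fin l → ZMod 2) : ℝ) = (2:ℝ)^(l*n) := by
  simp [Fintype.card_fun, ZMod.card]
  rw [← pow_mul]

noncomputable def FF (l n : ℕ) (x : Fin n → ZMod 2)
    (I J : Fin n → Fin l → ZMod 2) : ℝ :=
  ((2:ℝ)^l - 1)⁻¹ * ∑ k ∈ kS l,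
    (TT l n x k I J - ((2:ℝ)^(l*n))⁻¹ * (if I = J then 1 else 0))

lemma rhoBn_apply (l n : ℕ) (x : Fin n → ZMod 2) (I J : Fin n → Fin l → ZMod 2) :
    rhoBn l n x I J = (((((2:ℝ)^l - 1)⁻¹ * ∑ k ∈ kS l, TT l n x k I J : ℝ)) : ℂ) := by
  unfold rhoBn TT
  rw [Matrix.smul_apply, Matrix.sum_apply]
  simp only [Matrix.of_apply, rhoB_apply]
  push_cast
  rw [smul_eq_mul]

lemma two_pow_l_sub_one_pos {l : ℕ} (hl : 1 ≤ l) : (0:ℝ) < (2:ℝ)^l - 1 := by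
  have : (2:ℝ)^1 ≤ (2:ℝ)^l := pow_le_pow_right₀ one_le_two hl
  norm_num at this ⊢
  linarith

lemma entry1 {l : ℕ} (n : ℕ) (hl : 1 ≤ l) (x : Fin n → ZMod 2)
    (I J : Fin n → Fin l → ZMod 2) :
    (rhoBn l n x - ((2:ℂ)^(l*n))⁻¹
        • (1 : Matrix (Fin n → Fin l → ZMod 2) (Fin n → Fin l → ZMod 2) ℂ)) I J
      = ((FF l n x I J : ℝ) : ℂ) := by
  have hc : ((2:ℝ)^l - 1) ≠ 0 := ne_of_gt (two_pow_l_sub_one_pos hl)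
  have hFF : FF l n x I J = (((2:ℝ)^l - 1)⁻¹ * ∑ k ∈ kS l, TT l n x k I J)
      - ((2:ℝ)^(l*n))⁻¹ * (if I = J then 1 else 0) := by
    unfold FF
    rw [Finset.sum_sub_distrib, Finset.sum_const, nsmul_eq_mul, kS_card_real l, mul_sub,
      ← mul_assoc, ← mul_assoc, inv_mul_cancel₀ hc, one_mul]
  rw [Matrix.sub_apply, Matrix.smul_apply, Matrix.one_apply, rhoBn_apply, hFF]
  push_cast [apply_ite Complex.ofReal, smul_eq_mul]
  ring

lemma entry2 {l : ℕ} (n : ℕ) (hl : 1 ≤ l) (x y : Fin n → ZMod 2)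
    (I J : Fin n → Fin l → ZMod 2) :
    (rhoBn l n x - rhoBn l n y) I J = ((FF l n x I J - FF l n y I J : ℝ) : ℂ) := by
  have h : rhoBn l n x - rhoBn l n y
      = (rhoBn l n x - ((2:ℂ)^(l*n))⁻¹
          • (1 : Matrix (Fin n → Fin l → ZMod 2) (Fin n → Fin l → ZMod 2) ℂ))
        - (rhoBn l n y - ((2:ℂ)^(l*n))⁻¹ • 1) :=
    (sub_sub_sub_cancel_right _ _ _).symm
  rw [h, Matrix.sub_apply, entry1 n hl x I J, entry1 n hl y I J]
  push_cast
  ring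

lemma mul_sum_sum {β : Type*} [Fintype β] (a : ℝ) (f : β → β → ℝ) :
    ∑ I : β, ∑ J : β, a * f I J = a * ∑ I : β, ∑ J : β, f I J := by
  rw [Finset.mul_sum]
  exact Finset.sum_congr rfl fun I _ => (Finset.mul_sum _ _ _).symm

lemma sum_sum_swap {β K : Type*} [Fintype β] (s : Finset K) (P : β → β → K → K → ℝ) :
    ∑ I : β, ∑ J : β, ∑ k ∈ s, ∑ k' ∈ s, P I J k k'
      = ∑ k ∈ s, ∑ k' ∈ s, ∑ I : β, ∑ J : β, P I J k k' := by
  have h1 : ∀ I : β, ∑ J : β, ∑ k ∈ s, ∑ k' ∈ s, P I J k k'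
      = ∑ k ∈ s, ∑ J : β, ∑ k' ∈ s, P I J k k' := fun I => Finset.sum_comm
  have h2 : ∀ (I : β) (k : K), ∑ J : β, ∑ k' ∈ s, P I J k k'
      = ∑ k' ∈ s, ∑ J : β, P I J k k' := fun I k => Finset.sum_comm
  simp only [h1, h2]
  rw [Finset.sum_comm]
  exact Finset.sum_congr rfl fun k _ => Finset.sum_comm

lemma inner_val {l : ℕ} (n : ℕ) (x y : Fin n → ZMod 2) {k k' : Fin l → ZMod 2}
    (hk : k ≠ 0) (hk' : k' ≠ 0) :
    ∑ I : Fin n → Fin l → ZMod 2, ∑ J : Fin n → Fin l → ZMod 2,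
      (TT l n x k I J - ((2:ℝ)^(l*n))⁻¹ * (if I = J then 1 else 0))
        * (TT l n y k' I J - ((2:ℝ)^(l*n))⁻¹ * (if I = J then 1 else 0))
      = ((2:ℝ)^(l*n))⁻¹ *
          ((if k = k' then ∏ j, (1 + (-1:ℝ)^((x j).val + (y j).val)) else 1) - 1) := by
  have hdcard : ((2:ℝ)^(l*n))⁻¹ * (2:ℝ)^(l*n) = 1 := inv_mul_cancel₀ (by positivity)
  have expand : ∀ I J : Fin n → Fin l → ZMod 2,
      (TT l n x k I J - ((2:ℝ)^(l*n))⁻¹ * (if I = J then 1 else 0))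
        * (TT l n y k' I J - ((2:ℝ)^(l*n))⁻¹ * (if I = J then 1 else 0))
      = TT l n x k I J * TT l n y k' I J
        - TT l n x k I J * (((2:ℝ)^(l*n))⁻¹ * (if I = J then 1 else 0))
        - TT l n y k' I J * (((2:ℝ)^(l*n))⁻¹ * (if I = J then 1 else 0))
        + ((2:ℝ)^(l*n))⁻¹ * ((2:ℝ)^(l*n))⁻¹
            * ((if I = J then 1 else 0) * (if I = J then 1 else 0)) := by
    intro I J; ring
  simp only [expand]
  simp only [Finset.sum_sub_distrib, Finset.sum_add_distrib]
  have hdiag : ∀ (u : Fin n → ZMod 2) (m : Fin l → ZMod 2), m ≠ 0 →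
      ∑ I : Fin n → Fin l → ZMod 2, ∑ J : Fin n → Fin l → ZMod 2,
        TT l n u m I J * (((2:ℝ)^(l*n))⁻¹ * (if I = J then 1 else 0)) = ((2:ℝ)^(l*n))⁻¹ := by
    intro u m hm
    have h1 : ∀ I : Fin n → Fin l → ZMod 2,
        ∑ J : Fin n → Fin l → ZMod 2,
          TT l n u m I J * (((2:ℝ)^(l*n))⁻¹ * (if I = J then 1 else 0))
        = TT l n u m I I * ((2:ℝ)^(l*n))⁻¹ := by
      intro I
      simp only [mul_ite, mul_one, mul_zero, Finset.sum_ite_eq, Finset.mem_univ, if_true]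
    simp only [h1]
    rw [← Finset.sum_mul, traceSum l n u hm, one_mul]
  have hee : ∑ I : Fin n → Fin l → ZMod 2, ∑ J : Fin n → Fin l → ZMod 2,
      ((2:ℝ)^(l*n))⁻¹ * ((2:ℝ)^(l*n))⁻¹
        * ((if I = J then (1:ℝ) else 0) * (if I = J then 1 else 0)) = ((2:ℝ)^(l*n))⁻¹ := by
    have h1 : ∀ I : Fin n → Fin l → ZMod 2,
        ∑ J : Fin n → Fin l → ZMod 2,
          ((2:ℝ)^(l*n))⁻¹ * ((2:ℝ)^(l*n))⁻¹
            * ((if I = J then (1:ℝ) else 0) * (if I = J then 1 else 0))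
        = ((2:ℝ)^(l*n))⁻¹ * ((2:ℝ)^(l*n))⁻¹ := by
      intro I
      simp only [ite_mul, mul_ite, mul_one, mul_zero, zero_mul, one_mul,
        Finset.sum_ite_eq, Finset.mem_univ, if_true]
    simp only [h1]
    rw [Finset.sum_const, Finset.card_univ, nsmul_eq_mul, card_beta]
    rw [show ((2:ℝ)^(l*n) * (((2:ℝ)^(l*n))⁻¹ * ((2:ℝ)^(l*n))⁻¹))
      = (((2:ℝ)^(l*n))⁻¹ * (2:ℝ)^(l*n)) * ((2:ℝ)^(l*n))⁻¹ by ring, hdcard, one_mul]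
  rw [pairSum l n x y hk hk', hdiag x k hk, hdiag y k' hk', hee]
  ring

lemma sqsum {l : ℕ} (n : ℕ) (hl : 1 ≤ l) (x y : Fin n → ZMod 2) :
    ∑ I : Fin n → Fin l → ZMod 2, ∑ J : Fin n → Fin l → ZMod 2,
      FF l n x I J * FF l n y I J
      = (((2:ℝ)^l - 1) * (2:ℝ)^(l*n))⁻¹ *
          ((∏ j, (1 + (-1:ℝ)^((x j).val + (y j).val))) - 1) := by
  have hc : ((2:ℝ)^l - 1) ≠ 0 := ne_of_gt (two_pow_l_sub_one_pos hl)
  have step1 : ∀ I J : Fin n → Fin l → ZMod 2,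
      FF l n x I J * FF l n y I J
      = ((2:ℝ)^l - 1)⁻¹ * ((2:ℝ)^l - 1)⁻¹ * ∑ k ∈ kS l, ∑ k' ∈ kS l,
          (TT l n x k I J - ((2:ℝ)^(l*n))⁻¹ * (if I = J then 1 else 0))
            * (TT l n y k' I J - ((2:ℝ)^(l*n))⁻¹ * (if I = J then 1 else 0)) := by
    intro I J
    unfold FF
    rw [mul_mul_mul_comm, Finset.sum_mul_sum]
  simp only [step1]
  rw [mul_sum_sum (((2:ℝ)^l - 1)⁻¹ * ((2:ℝ)^l - 1)⁻¹)]
  rw [sum_sum_swap (kS l) (fun I J k k' =>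
    (TT l n x k I J - ((2:ℝ)^(l*n))⁻¹ * (if I = J then 1 else 0))
      * (TT l n y k' I J - ((2:ℝ)^(l*n))⁻¹ * (if I = J then 1 else 0)))]
  have hval : ∀ k ∈ kS l, (∑ k' ∈ kS l, ∑ I : Fin n → Fin l → ZMod 2,
      ∑ J : Fin n → Fin l → ZMod 2,
      (TT l n x k I J - ((2:ℝ)^(l*n))⁻¹ * (if I = J then 1 else 0))
        * (TT l n y k' I J - ((2:ℝ)^(l*n))⁻¹ * (if I = J then 1 else 0)))
      = ((2:ℝ)^(l*n))⁻¹ * ((∏ j, (1 + (-1:ℝ)^((x j).val + (y j).val))) - 1) := by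
    intro k hkmem
    have hk : k ≠ 0 := (Finset.mem_filter.mp hkmem).2
    have hrow : ∀ k' ∈ kS l, (∑ I : Fin n → Fin l → ZMod 2, ∑ J : Fin n → Fin l → ZMod 2,
        (TT l n x k I J - ((2:ℝ)^(l*n))⁻¹ * (if I = J then 1 else 0))
          * (TT l n y k' I J - ((2:ℝ)^(l*n))⁻¹ * (if I = J then 1 else 0)))
        = if k = k' then ((2:ℝ)^(l*n))⁻¹ *
            ((∏ j, (1 + (-1:ℝ)^((x j).val + (y j).val))) - 1) else 0 := by
      intro k' hk'mem
      have hk' : k' ≠ 0 := (Finset.mem_filter.mp hk'mem).2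
      rw [inner_val n x y hk hk']
      split_ifs with h
      · rfl
      · ring
    rw [Finset.sum_congr rfl hrow, Finset.sum_ite_eq, if_pos hkmem]
  rw [Finset.sum_congr rfl hval, Finset.sum_const, nsmul_eq_mul, kS_card_real, mul_inv]
  field_simp

lemma part1 (l n : ℕ) (hl : 1 ≤ l) (x : Fin n → ZMod 2) :
    traceNorm (rhoBn l n x - ((2 : ℂ) ^ (l * n))⁻¹ • (1 : Matrix _ _ ℂ))
      ≤ Real.sqrt (((2 : ℝ) ^ n - 1) / ((2 : ℝ) ^ l - 1)) := by
  refine le_trans (traceNorm_le_sqrt _) ?_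
  have hnorm : ∀ I J : Fin n → Fin l → ZMod 2,
      ‖(rhoBn l n x - ((2:ℂ)^(l*n))⁻¹
          • (1 : Matrix (Fin n → Fin l → ZMod 2) (Fin n → Fin l → ZMod 2) ℂ)) I J‖ ^ 2
      = FF l n x I J * FF l n x I J := by
    intro I J
    rw [entry1 n hl x I J, Complex.norm_real, Real.norm_eq_abs, sq_abs, sq]
  simp only [hnorm]
  rw [sqsum n hl x x]
  have h2 : ∀ j : Fin n, (1 + (-1:ℝ)^((x j).val + (x j).val)) = 2 := by
    intro j
    rw [Even.neg_one_pow ⟨(x j).val, rfl⟩]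
    norm_num
  rw [Finset.prod_congr rfl (fun j _ => h2 j), Finset.prod_const, Finset.card_univ,
    Fintype.card_fin, card_beta]
  have heq : (2:ℝ)^(l*n) * ((((2:ℝ)^l - 1) * (2:ℝ)^(l*n))⁻¹ * ((2:ℝ)^n - 1))
      = ((2:ℝ)^n - 1) / ((2:ℝ)^l - 1) := by
    have h1 : ((2:ℝ)^l - 1) ≠ 0 := ne_of_gt (two_pow_l_sub_one_pos hl)
    have h2' : ((2:ℝ)^(l*n)) ≠ 0 := by positivity
    field_simp
  rw [heq]

lemma part2bound (l n : ℕ) (hl : 1 ≤ l) (x y : Fin n → ZMod 2) :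
    traceNorm (rhoBn l n x - rhoBn l n y)
      ≤ Real.sqrt ((2:ℝ)^(n+1) / ((2:ℝ)^l - 1)) := by
  refine le_trans (traceNorm_le_sqrt _) ?_
  apply Real.sqrt_le_sqrt
  have hnorm : ∀ I J : Fin n → Fin l → ZMod 2,
      ‖(rhoBn l n x - rhoBn l n y) I J‖ ^ 2
      = FF l n x I J * FF l n x I J - 2 * (FF l n x I J * FF l n y I J)
        + FF l n y I J * FF l n y I J := by
    intro I J
    rw [entry2 n hl x y I J, Complex.norm_real, Real.norm_eq_abs, sq_abs]
    ring
  simp only [hnorm]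
  simp only [Finset.sum_add_distrib, Finset.sum_sub_distrib]
  rw [mul_sum_sum 2 (fun I J => FF l n x I J * FF l n y I J)]
  rw [sqsum n hl x x, sqsum n hl x y, sqsum n hl y y]
  have h2x : ∀ (u : Fin n → ZMod 2), (∏ j, (1 + (-1:ℝ)^((u j).val + (u j).val))) = 2^n := by
    intro u
    rw [Finset.prod_congr rfl (fun j (_ : j ∈ Finset.univ) =>
      show (1 + (-1:ℝ)^((u j).val + (u j).val)) = 2 from by
        rw [Even.neg_one_pow ⟨(u j).val, rfl⟩]; norm_num),
      Finset.prod_const, Finset.card_univ, Fintype.card_fin]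
  rw [h2x x, h2x y, card_beta]
  set P : ℝ := ∏ j, (1 + (-1:ℝ)^((x j).val + (y j).val)) with hP
  have hPnonneg : (0:ℝ) ≤ P := by
    rw [hP]
    apply Finset.prod_nonneg
    intro j _
    rcases Nat.even_or_odd ((x j).val + (y j).val) with h | h
    · rw [h.neg_one_pow]; norm_num
    · rw [h.neg_one_pow]; norm_num
  have hc : (0:ℝ) < (2:ℝ)^l - 1 := two_pow_l_sub_one_pos hl
  have h2ln : (0:ℝ) < (2:ℝ)^(l*n) := by positivity
  have key : (2:ℝ)^(l*n) * ((((2:ℝ)^l-1)*(2:ℝ)^(l*n))⁻¹ * ((2:ℝ)^n - 1)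
      - 2*((((2:ℝ)^l-1)*(2:ℝ)^(l*n))⁻¹ * (P - 1))
      + (((2:ℝ)^l-1)*(2:ℝ)^(l*n))⁻¹ * ((2:ℝ)^n-1))
      = (2*(2:ℝ)^n - 2*P)/((2:ℝ)^l-1) := by
    field_simp
    ring
  rw [key]
  apply div_le_div_of_nonneg_right ?_ hc.le
  rw [pow_succ]
  linarith

lemma half_bound (l n : ℕ) (hl : 1 ≤ l) :
    (1/2:ℝ) * Real.sqrt ((2:ℝ)^(n+1) / ((2:ℝ)^l - 1))
      ≤ Real.sqrt ((2:ℝ) ^ ((n:ℝ) - (l:ℝ))) := by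
  have hb : (2:ℝ) ≤ (2:ℝ)^l := by
    calc (2:ℝ) = 2^1 := (pow_one 2).symm
    _ ≤ 2^l := pow_le_pow_right₀ one_le_two hl
  have hc : (0:ℝ) < (2:ℝ)^l - 1 := by linarith
  have hrw : (2:ℝ) ^ ((n:ℝ) - (l:ℝ)) = (2:ℝ)^n / (2:ℝ)^l := by
    rw [Real.rpow_sub two_pos, Real.rpow_natCast, Real.rpow_natCast]
  rw [hrw]
  have hA : (0:ℝ) ≤ (2:ℝ)^(n+1) / ((2:ℝ)^l - 1) := by positivity
  have h4 : Real.sqrt 4 = 2 := by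
    rw [show (4:ℝ) = 2^2 by norm_num, Real.sqrt_sq (by norm_num : (0:ℝ) ≤ 2)]
  rw [show (1/2:ℝ) * Real.sqrt ((2:ℝ)^(n+1) / ((2:ℝ)^l - 1))
      = Real.sqrt ((2:ℝ)^(n+1) / ((2:ℝ)^l - 1)) / Real.sqrt 4 by rw [h4]; ring]
  rw [← Real.sqrt_div hA]
  apply Real.sqrt_le_sqrt
  rw [div_div, div_le_div_iff₀ (by positivity) (by positivity)]
  have hn : (0:ℝ) < (2:ℝ)^n := by positivity
  have hmul : (2:ℝ)^n * 2 ≤ (2:ℝ)^n * (2:ℝ)^l := by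
    exact mul_le_mul_of_nonneg_left hb hn.le
  rw [pow_succ]
  nlinarith

/-- `‖ρ_{(x₁,…,xₙ)} − 2^{−ln} I‖_tr ≤ √((2ⁿ−1)/(2^l−1))`; hence if
`√(2^{n−l})` is eventually smaller than any inverse positive polynomial, the
trace distance between the cipher states of any two plaintexts is too, i.e. the
protocol is information-theoretically indistinguishable. -/
theorem stmt15 :
    (∀ (l n : ℕ), 1 ≤ l → ∀ x : Fin n → ZMod 2,
      traceNorm (rhoBn l n x - ((2 : ℂ) ^ (l * n))⁻¹ • (1 : Matrix _ _ ℂ))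
        ≤ Real.sqrt (((2 : ℝ) ^ n - 1) / ((2 : ℝ) ^ l - 1))) ∧
    (∀ l : ℕ → ℕ,
      (∀ p : Polynomial ℝ, (∀ m : ℕ, 0 < p.eval (m : ℝ)) →
        ∀ᶠ n : ℕ in Filter.atTop,
          Real.sqrt ((2 : ℝ) ^ ((n : ℝ) - (l n : ℝ))) < 1 / p.eval (n : ℝ)) →
      ∀ p : Polynomial ℝ, (∀ m : ℕ, 0 < p.eval (m : ℝ)) →
        ∀ᶠ n : ℕ in Filter.atTop, ∀ x y : Fin n → ZMod 2,
          (1 / 2 : ℝ) * traceNorm (rhoBn (l n) n x - rhoBn (l n) n y)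
            < 1 / p.eval (n : ℝ)) := by
  constructor
  · intro l n hl x
    exact part1 l n hl x
  · intro l H p hp
    have h0 := H (Polynomial.C 1) (by intro m; simp)
    have h1 := H p hp
    filter_upwards [h0, h1] with n hn0 hn1
    intro x y
    simp only [Polynomial.eval_C] at hn0
    have hln : 1 ≤ l n := by
      rcases Nat.eq_zero_or_pos (l n) with h0' | h0'
      · exfalso
        rw [h0'] at hn0
        have hge : (1:ℝ) ≤ Real.sqrt ((2:ℝ) ^ ((n:ℝ) - ((0:ℕ):ℝ))) := by
          rw [Nat.cast_zero, sub_zero, Real.rpow_natCast]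
          rw [show (1:ℝ) = Real.sqrt 1 by simp]
          apply Real.sqrt_le_sqrt
          exact one_le_pow₀ one_le_two
        norm_num at hn0 hge
        exact absurd hn0 (not_lt.mpr (by
          rw [show (1:ℝ) = Real.sqrt 1 by simp]
          exact Real.sqrt_le_sqrt (by linarith)))
      · exact h0'
    have step : (1 / 2 : ℝ) * traceNorm (rhoBn (l n) n x - rhoBn (l n) n y)
        ≤ Real.sqrt ((2 : ℝ) ^ ((n : ℝ) - (l n : ℝ))) := by
      refine le_trans ?_ (half_bound (l n) n hln)
      have := part2bound (l n) n hln x y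
      linarith
    exact lt_of_le_of_lt step hn1
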